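/- Let 0 < R ≤ ∞ and let φ be a quasiconcave function on [0,R), with complementary function φ̃ defined by φ̃(t) = t/φ(t) for t ∈ (0,R) and φ̃(0) = 0. Then the following three conditions are equivalent: (i) there is a constant C > 0 such that ∫₀ᵗ ds/φ(s) ≤ C · t/φ(t) for all t ∈ (0,R) (the B-condition); (ii) there is a constant C > 0 such that ∫₀ᵗ φ̃(s)/s ds ≤ C · φ̃(t) for all t ∈ (0,R); (iii) there exists a constant c ∈ (0,1) such that inf_{0<t<R} φ̃(t)/φ̃(ct) > 1. -/

import Mathlib

open MeasureTheory Set ENNReal Filter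

noncomputable section

/-- The open interval `(0, R)` inside `ℝ`, where `R ∈ (0, ∞]` is an extended real. -/
def DomIoo (R : ℝ≥0∞) : Set ℝ := {t : ℝ | 0 < t ∧ ENNReal.ofReal t < R}

/-- The part of `(0, R)` lying strictly above `t`. -/
def DomAbove (R : ℝ≥0∞) (t : ℝ) : Set ℝ := {s : ℝ | t < s ∧ ENNReal.ofReal s < R}

/-- `φ : [0, R) → [0, ∞)` is quasiconcave: it vanishes exactly at `0`, is nondecreasing,
and `t ↦ φ(t)/t` is nonincreasing on `(0, R)`.  (Values on `(0, R)` are finite.) -/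
def QuasiConcaveOn (R : ℝ≥0∞) (φ : ℝ → ℝ≥0∞) : Prop :=
  φ 0 = 0 ∧
  (∀ t ∈ DomIoo R, 0 < φ t ∧ φ t < ⊤) ∧
  (∀ s t : ℝ, 0 ≤ s → s ≤ t → t ∈ DomIoo R → φ s ≤ φ t) ∧
  (∀ s t : ℝ, s ∈ DomIoo R → s ≤ t → t ∈ DomIoo R →
    φ t / ENNReal.ofReal t ≤ φ s / ENNReal.ofReal s)

/-- `f` is a nonnegative nonincreasing measurable function on `(0, R)`
(nonnegativity is built into the codomain `[0, ∞]`). -/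
def NonincOn (R : ℝ≥0∞) (f : ℝ → ℝ≥0∞) : Prop :=
  Measurable f ∧ ∀ s t : ℝ, s ∈ DomIoo R → s ≤ t → t ∈ DomIoo R → f t ≤ f s

/-- The level function `f**(t) = (1/t) ∫₀ᵗ f(s) ds`. -/
def dstar (f : ℝ → ℝ≥0∞) (t : ℝ) : ℝ≥0∞ :=
  (∫⁻ s in Ioo (0 : ℝ) t, f s) / ENNReal.ofReal t

/-- The supremum operator `S_φ f(t) = (1/φ(t)) ⋅ sup_{0<s<t} φ(s) f(s)`. -/
def Ssup (φ f : ℝ → ℝ≥0∞) (t : ℝ) : ℝ≥0∞ :=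
  (⨆ s ∈ Ioo (0 : ℝ) t, φ s * f s) / φ t

/-- The supremum operator `T_ψ f(t) = (1/ψ(t)) ⋅ sup_{t<s<R} ψ(s) f(s)`. -/
def Tsup (R : ℝ≥0∞) (ψ f : ℝ → ℝ≥0∞) (t : ℝ) : ℝ≥0∞ :=
  (⨆ s ∈ DomAbove R t, ψ s * f s) / ψ t

/-- The `B`-condition: `∫₀ᵗ ds/φ(s) ≤ C ⋅ t/φ(t)` on `(0, R)` for some constant `C > 0`. -/
def BCond (R : ℝ≥0∞) (φ : ℝ → ℝ≥0∞) : Prop :=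
  ∃ C : ℝ, 0 < C ∧ ∀ t ∈ DomIoo R,
    (∫⁻ s in Ioo (0 : ℝ) t, 1 / φ s) ≤ ENNReal.ofReal C * (ENNReal.ofReal t / φ t)

/-- A weight on `(0, R)`: positive, measurable and locally integrable
(with finite integral near the origin). -/
def IsWeight (R : ℝ≥0∞) (w : ℝ → ℝ≥0∞) : Prop :=
  Measurable w ∧ (∀ t ∈ DomIoo R, 0 < w t ∧ w t < ⊤) ∧
  ∀ t ∈ DomIoo R, (∫⁻ s in Ioo (0 : ℝ) t, w s) < ⊤

/-- Nontriviality of a weight `w` for the exponent `p`: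
`∫₁^∞ s^{-p} w(s) ds < ∞` when `R = ∞`, and `∫₀ᴿ s^{-p} w(s) ds = ∞` when `R < ∞`. -/
def Nontriv (R : ℝ≥0∞) (p : ℝ) (w : ℝ → ℝ≥0∞) : Prop :=
  (R = ⊤ → (∫⁻ s in Ioi (1 : ℝ), ENNReal.ofReal s ^ (-p) * w s) < ⊤) ∧
  (R ≠ ⊤ → (∫⁻ s in DomIoo R, ENNReal.ofReal s ^ (-p) * w s) = ⊤)

namespace BAux

variable {R : ℝ≥0∞} {φ tilde : ℝ → ℝ≥0∞}

lemma mem_dom_of_le {t s : ℝ} (ht : t ∈ DomIoo R) (hs : 0 < s) (hst : s ≤ t) :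
    s ∈ DomIoo R :=
  ⟨hs, lt_of_le_of_lt (ENNReal.ofReal_le_ofReal hst) ht.2⟩

lemma tilde_ne (hφ : QuasiConcaveOn R φ)
    (htilde : ∀ t ∈ DomIoo R, tilde t = ENNReal.ofReal t / φ t)
    {t : ℝ} (ht : t ∈ DomIoo R) : tilde t ≠ 0 ∧ tilde t ≠ ⊤ := by
  obtain ⟨hpos, hfin⟩ := hφ.2.1 t ht
  rw [htilde t ht]
  have h0 : ENNReal.ofReal t ≠ 0 := (ENNReal.ofReal_pos.mpr ht.1).ne'
  constructor
  · simp [ENNReal.div_eq_zero_iff, h0, hfin.ne]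
  · simp [ENNReal.div_eq_top, hpos.ne', ENNReal.ofReal_ne_top]

lemma F_lower (hφ : QuasiConcaveOn R φ) {t : ℝ} (ht : t ∈ DomIoo R) :
    ENNReal.ofReal t / φ t ≤ ∫⁻ s in Ioo (0:ℝ) t, 1 / φ s := by
  have h1 : ∫⁻ s in Ioo (0:ℝ) t, (φ t)⁻¹ ≤ ∫⁻ s in Ioo (0:ℝ) t, 1 / φ s := by
    refine setLIntegral_mono' measurableSet_Ioo fun s hs => ?_
    rw [one_div]
    exact ENNReal.inv_le_inv.mpr (hφ.2.2.1 s t hs.1.le hs.2.le ht)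
  calc ENNReal.ofReal t / φ t = (φ t)⁻¹ * volume (Ioo (0:ℝ) t) := by
        rw [Real.volume_Ioo, sub_zero, div_eq_mul_inv, mul_comm]
    _ = ∫⁻ s in Ioo (0:ℝ) t, (φ t)⁻¹ := (setLIntegral_const _ _).symm
    _ ≤ _ := h1

/-- Halving lemma for (i) ⇒ (iii). -/
lemma half_step (hφ : QuasiConcaveOn R φ) {C : ℝ} (hC1 : 1 ≤ C)
    (hC : ∀ t ∈ DomIoo R,
      (∫⁻ s in Ioo (0 : ℝ) t, 1 / φ s) ≤ ENNReal.ofReal C * (ENNReal.ofReal t / φ t))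
    {t : ℝ} (ht : t ∈ DomIoo R) :
    (∫⁻ s in Ioo (0:ℝ) (t/2), 1 / φ s) ≤
      ENNReal.ofReal (1 - 1/(2*C)) * ∫⁻ s in Ioo (0:ℝ) t, 1 / φ s := by
  have hC0 : (0:ℝ) < C := lt_of_lt_of_le one_pos hC1
  have ht0 : (0:ℝ) < t := ht.1
  have ht2 : (0:ℝ) < t/2 := by linarith
  have hmem2 : t/2 ∈ DomIoo R := mem_dom_of_le ht ht2 (by linarith)
  have hAne : ENNReal.ofReal t / φ t ≠ ⊤ := by
    simp [ENNReal.div_eq_top, (hφ.2.1 t ht).1.ne', ENNReal.ofReal_ne_top]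
  have hFfin : (∫⁻ s in Ioo (0:ℝ) t, 1 / φ s) ≠ ⊤ :=
    ((hC t ht).trans_lt (ENNReal.mul_lt_top ENNReal.ofReal_lt_top hAne.lt_top)).ne
  -- split the integral
  have hsplit : (∫⁻ s in Ioo (0:ℝ) t, 1 / φ s) =
      (∫⁻ s in Ioo (0:ℝ) (t/2), 1 / φ s) + ∫⁻ s in Ico (t/2) t, 1 / φ s := by
    rw [← lintegral_union measurableSet_Ico
      (Set.disjoint_left.mpr fun x hx hx' => absurd hx.2 (not_lt.mpr hx'.1)),
      Set.Ioo_union_Ico_eq_Ioo ht2 (by linarith)]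
  -- lower bound for the right piece
  have hB : ENNReal.ofReal (1/(2*C)) * (∫⁻ s in Ioo (0:ℝ) t, 1 / φ s) ≤
      ∫⁻ s in Ico (t/2) t, 1 / φ s := by
    have h1 : (∫⁻ s in Ico (t/2) t, (φ t)⁻¹) ≤ ∫⁻ s in Ico (t/2) t, 1 / φ s := by
      refine setLIntegral_mono' measurableSet_Ico fun s hs => ?_
      rw [one_div]
      exact ENNReal.inv_le_inv.mpr (hφ.2.2.1 s t (le_trans ht2.le hs.1) hs.2.le ht)
    have h2 : (∫⁻ s in Ico (t/2) t, (φ t)⁻¹) = ENNReal.ofReal (t/2) / φ t := by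
      rw [setLIntegral_const, Real.volume_Ico, show t - t/2 = t/2 from by ring,
        div_eq_mul_inv]
      exact mul_comm _ _
    calc ENNReal.ofReal (1/(2*C)) * (∫⁻ s in Ioo (0:ℝ) t, 1 / φ s)
        ≤ ENNReal.ofReal (1/(2*C)) * (ENNReal.ofReal C * (ENNReal.ofReal t / φ t)) := by
          exact mul_le_mul_right (hC t ht) _
      _ = ENNReal.ofReal (1/(2*C) * C) * (ENNReal.ofReal t / φ t) := by
          rw [ENNReal.ofReal_mul (by positivity), mul_assoc]
      _ = ENNReal.ofReal (1/2) * (ENNReal.ofReal t / φ t) := by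
          congr 1
          rw [one_div, mul_inv, mul_assoc, inv_mul_cancel₀ hC0.ne', mul_one, one_div]
      _ = ENNReal.ofReal (t/2) / φ t := by
          rw [← mul_div_assoc, ← ENNReal.ofReal_mul (by norm_num : (0:ℝ) ≤ 1/2),
            show (1/2:ℝ)*t = t/2 from by ring]
      _ = ∫⁻ s in Ico (t/2) t, (φ t)⁻¹ := h2.symm
      _ ≤ _ := h1
  -- combine
  have key : (∫⁻ s in Ioo (0:ℝ) (t/2), 1 / φ s)
      + ENNReal.ofReal (1/(2*C)) * (∫⁻ s in Ioo (0:ℝ) t, 1 / φ s)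
      ≤ ENNReal.ofReal (1 - 1/(2*C)) * (∫⁻ s in Ioo (0:ℝ) t, 1 / φ s)
      + ENNReal.ofReal (1/(2*C)) * (∫⁻ s in Ioo (0:ℝ) t, 1 / φ s) := by
    have : (∫⁻ s in Ioo (0:ℝ) (t/2), 1 / φ s)
        + ENNReal.ofReal (1/(2*C)) * (∫⁻ s in Ioo (0:ℝ) t, 1 / φ s)
        ≤ ∫⁻ s in Ioo (0:ℝ) t, 1 / φ s :=
      calc (∫⁻ s in Ioo (0:ℝ) (t/2), 1 / φ s)
          + ENNReal.ofReal (1/(2*C)) * (∫⁻ s in Ioo (0:ℝ) t, 1 / φ s)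
          ≤ (∫⁻ s in Ioo (0:ℝ) (t/2), 1 / φ s) + ∫⁻ s in Ico (t/2) t, 1 / φ s :=
            add_le_add_right hB _
        _ = _ := hsplit.symm
    refine this.trans (le_of_eq ?_)
    rw [← add_mul, ← ENNReal.ofReal_add (by
        have : 1/(2*C) ≤ 1/2 := by
          apply div_le_div_of_nonneg_left <;> linarith
        linarith) (by positivity)]
    norm_num
  have hfin2 : ENNReal.ofReal (1/(2*C)) * (∫⁻ s in Ioo (0:ℝ) t, 1 / φ s) ≠ ⊤ :=
    ENNReal.mul_ne_top ENNReal.ofReal_ne_top hFfin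
  exact (ENNReal.add_le_add_iff_right hfin2).mp key

end BAux

namespace Part2

variable {R : ℝ≥0∞} {φ tilde : ℝ → ℝ≥0∞}

open BAux

lemma iter_step (hφ : QuasiConcaveOn R φ) {C : ℝ} (hC1 : 1 ≤ C)
    (hC : ∀ t ∈ DomIoo R,
      (∫⁻ s in Ioo (0 : ℝ) t, 1 / φ s) ≤ ENNReal.ofReal C * (ENNReal.ofReal t / φ t)) :
    ∀ n : ℕ, ∀ t ∈ DomIoo R, (∫⁻ s in Ioo (0:ℝ) (t / 2^n), 1 / φ s) ≤
      ENNReal.ofReal (1 - 1/(2*C)) ^ n * ∫⁻ s in Ioo (0:ℝ) t, 1 / φ s := by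
  intro n
  induction n with
  | zero => intro t _; simp
  | succ n ih =>
    intro t ht
    have hmem : t / 2^n ∈ DomIoo R := mem_dom_of_le ht (by have h00 := ht.1; positivity)
      (div_le_self ht.1.le (one_le_pow₀ (by norm_num)))
    have h1 := half_step hφ hC1 hC hmem
    have heq : t / 2^(n+1) = (t / 2^n)/2 := by rw [pow_succ]; ring
    rw [heq]
    calc (∫⁻ s in Ioo (0:ℝ) ((t/2^n)/2), 1 / φ s)
        ≤ ENNReal.ofReal (1 - 1/(2*C)) * ∫⁻ s in Ioo (0:ℝ) (t/2^n), 1 / φ s := h1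
      _ ≤ ENNReal.ofReal (1 - 1/(2*C)) *
          (ENNReal.ofReal (1 - 1/(2*C)) ^ n * ∫⁻ s in Ioo (0:ℝ) t, 1 / φ s) :=
            mul_le_mul_right (ih t ht) _
      _ = ENNReal.ofReal (1 - 1/(2*C)) ^ (n+1) * ∫⁻ s in Ioo (0:ℝ) t, 1 / φ s := by
          rw [pow_succ, ← mul_assoc, mul_comm (ENNReal.ofReal _ ^ n)]

lemma i_to_iii (hφ : QuasiConcaveOn R φ)
    (htilde : ∀ t ∈ DomIoo R, tilde t = ENNReal.ofReal t / φ t)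
    (hex : ∃ C : ℝ, 0 < C ∧ ∀ t ∈ DomIoo R,
      (∫⁻ s in Ioo (0 : ℝ) t, 1 / φ s) ≤ ENNReal.ofReal C * (ENNReal.ofReal t / φ t)) :
    ∃ c : ℝ, 0 < c ∧ c < 1 ∧ 1 < ⨅ t ∈ DomIoo R, tilde t / tilde (c * t) := by
  obtain ⟨C₀, hC₀, hC'⟩ := hex
  set C : ℝ := max C₀ 1 with hCdef
  have hC1 : 1 ≤ C := le_max_right _ _
  have hC0 : (0:ℝ) < C := lt_of_lt_of_le one_pos hC1
  have hC : ∀ t ∈ DomIoo R,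
      (∫⁻ s in Ioo (0 : ℝ) t, 1 / φ s) ≤ ENNReal.ofReal C * (ENNReal.ofReal t / φ t) :=
    fun t ht => (hC' t ht).trans
      (mul_le_mul_left (ENNReal.ofReal_le_ofReal (le_max_left _ _)) _)
  set θ : ℝ := 1 - 1/(2*C) with hθdef
  have hθhalf : (1:ℝ)/(2*C) ≤ 1/2 := by
    apply div_le_div_of_nonneg_left <;> linarith
  have hθ0 : 0 < θ := by rw [hθdef]; linarith
  have hθ1 : θ < 1 := by
    have : (0:ℝ) < 1/(2*C) := by positivity
    rw [hθdef]; linarith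
  obtain ⟨n, hn⟩ : ∃ n : ℕ, θ^n < 1/C := exists_pow_lt_of_lt_one (by positivity) hθ1
  set k : ℝ := θ^n * C with hkdef
  have hk0 : 0 < k := by positivity
  have hk1 : k < 1 := by
    rw [hkdef]
    calc θ^n * C < (1/C) * C := by
          exact mul_lt_mul_of_pos_right hn hC0
      _ = 1 := by field_simp
  have hn0 : n ≠ 0 := by
    intro h
    rw [h, pow_zero] at hn
    have : (1:ℝ)/C ≤ 1 := by
      rw [div_le_one hC0]; exact hC1
    linarith
  refine ⟨(1/2)^n, by positivity, ?_, ?_⟩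
  · exact pow_lt_one₀ (by norm_num) (by norm_num) hn0
  · have key : ∀ t ∈ DomIoo R, tilde ((1/2)^n * t) ≤ ENNReal.ofReal k * tilde t := by
      intro t ht
      have hct : (1/2:ℝ)^n * t = t / 2^n := by
        rw [one_div, inv_pow, inv_mul_eq_div]
      have hmem : t / 2^n ∈ DomIoo R := mem_dom_of_le ht (by have h00 := ht.1; positivity)
        (div_le_self ht.1.le (one_le_pow₀ (by norm_num)))
      rw [hct, htilde _ hmem, htilde _ ht]
      calc ENNReal.ofReal (t/2^n) / φ (t/2^n)
          ≤ ∫⁻ s in Ioo (0:ℝ) (t/2^n), 1 / φ s := F_lower hφ hmem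
        _ ≤ ENNReal.ofReal θ ^ n * ∫⁻ s in Ioo (0:ℝ) t, 1 / φ s :=
            iter_step hφ hC1 hC n t ht
        _ ≤ ENNReal.ofReal θ ^ n * (ENNReal.ofReal C * (ENNReal.ofReal t / φ t)) :=
            mul_le_mul_right (hC t ht) _
        _ = ENNReal.ofReal k * (ENNReal.ofReal t / φ t) := by
            rw [← mul_assoc, ← ENNReal.ofReal_pow hθ0.le, ← ENNReal.ofReal_mul (by positivity)]
    have hbound : ENNReal.ofReal (1/k) ≤ ⨅ t ∈ DomIoo R, tilde t / tilde ((1/2)^n * t) := by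
      refine le_iInf₂ fun t ht => ?_
      have hmemct : (1/2:ℝ)^n * t ∈ DomIoo R := mem_dom_of_le ht (by have h00 := ht.1; positivity)
        (by nlinarith [pow_le_one₀ (by norm_num : (0:ℝ) ≤ 1/2) (by norm_num : (1/2:ℝ) ≤ 1) (n := n), ht.1])
      obtain ⟨hne0, hnetop⟩ := tilde_ne hφ htilde hmemct
      rw [ENNReal.le_div_iff_mul_le (Or.inl hne0) (Or.inl hnetop)]
      calc ENNReal.ofReal (1/k) * tilde ((1/2)^n * t)
          ≤ ENNReal.ofReal (1/k) * (ENNReal.ofReal k * tilde t) :=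
            mul_le_mul_right (key t ht) _
        _ = ENNReal.ofReal (1/k * k) * tilde t := by
            rw [← mul_assoc, ← ENNReal.ofReal_mul (by positivity)]
        _ = tilde t := by
            rw [one_div, inv_mul_cancel₀ hk0.ne', ENNReal.ofReal_one, one_mul]
    exact lt_of_lt_of_le (ENNReal.one_lt_ofReal.mpr ((one_lt_div hk0).mpr hk1)) hbound

end Part2

namespace Part3

variable {R : ℝ≥0∞} {φ tilde : ℝ → ℝ≥0∞}

open BAux

lemma mul_step {q : ℝ} (hq : 0 < q) {x y : ℝ≥0∞} (h : ENNReal.ofReal q * x ≤ y) :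
    x ≤ ENNReal.ofReal (1/q) * y := by
  calc x = ENNReal.ofReal (1/q) * (ENNReal.ofReal q * x) := by
        rw [← mul_assoc, ← ENNReal.ofReal_mul (by positivity), one_div,
          inv_mul_cancel₀ hq.ne', ENNReal.ofReal_one, one_mul]
    _ ≤ _ := mul_le_mul_right h _

lemma Ioo_eq_iUnion {c t : ℝ} (hc0 : 0 < c) (hc1 : c < 1) (ht : 0 < t) :
    Ioo (0:ℝ) t = ⋃ n : ℕ, Ico (c^(n+1) * t) (c^n * t) := by
  ext s
  simp only [mem_Ioo, mem_iUnion, mem_Ico]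
  constructor
  · rintro ⟨hs0, hst⟩
    have hexQ : ∃ n : ℕ, c^(n+1) * t ≤ s := by
      obtain ⟨n, hn⟩ := exists_pow_lt_of_lt_one (div_pos hs0 ht) hc1
      refine ⟨n, ?_⟩
      have h1 : c^(n+1) ≤ c^n := pow_le_pow_of_le_one hc0.le hc1.le (Nat.le_succ n)
      have h2 : c^n * t < s := (lt_div_iff₀ ht).mp hn
      nlinarith
    classical
    refine ⟨Nat.find hexQ, Nat.find_spec hexQ, ?_⟩
    rcases Nat.eq_zero_or_pos (Nat.find hexQ) with h0 | hpos
    · rw [h0, pow_zero, one_mul]; exact hst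
    · have hm : Nat.find hexQ - 1 < Nat.find hexQ := by omega
      have hmin := Nat.find_min hexQ hm
      push_neg at hmin
      have heq : Nat.find hexQ - 1 + 1 = Nat.find hexQ := by omega
      rw [heq] at hmin
      exact hmin
  · rintro ⟨n, h1, h2⟩
    have hp : (0:ℝ) < c^(n+1) * t := by positivity
    have hle : c^n * t ≤ t := by
      nlinarith [pow_le_one₀ hc0.le hc1.le (n := n)]
    exact ⟨lt_of_lt_of_le hp h1, lt_of_lt_of_le h2 hle⟩

lemma iii_to_i (hφ : QuasiConcaveOn R φ)
    (htilde : ∀ t ∈ DomIoo R, tilde t = ENNReal.ofReal t / φ t)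
    (h : ∃ c : ℝ, 0 < c ∧ c < 1 ∧ 1 < ⨅ t ∈ DomIoo R, tilde t / tilde (c * t)) :
    ∃ C : ℝ, 0 < C ∧ ∀ t ∈ DomIoo R,
      (∫⁻ s in Ioo (0 : ℝ) t, 1 / φ s) ≤ ENNReal.ofReal C * (ENNReal.ofReal t / φ t) := by
  obtain ⟨c, hc0, hc1, hI⟩ := h
  obtain ⟨q, hq0, hq1, hqI⟩ := ENNReal.lt_iff_exists_real_btwn.mp hI
  have hq1' : (1:ℝ) < q := ENNReal.one_lt_ofReal.mp hq1
  have hq0' : (0:ℝ) < q := lt_trans one_pos hq1'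
  have memct : ∀ t ∈ DomIoo R, c * t ∈ DomIoo R := fun t ht =>
    mem_dom_of_le ht (by have := ht.1; positivity) (by nlinarith [ht.1])
  have key : ∀ t ∈ DomIoo R, ENNReal.ofReal q * tilde (c*t) ≤ tilde t := by
    intro t ht
    have hct := memct t ht
    have h2 : ENNReal.ofReal q ≤ tilde t / tilde (c*t) :=
      le_trans hqI.le (iInf₂_le t ht)
    exact (ENNReal.le_div_iff_mul_le (Or.inl (tilde_ne hφ htilde hct).1)
      (Or.inl (tilde_ne hφ htilde hct).2)).mp h2
  have mempow : ∀ (n : ℕ), ∀ t ∈ DomIoo R, c^n * t ∈ DomIoo R := by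
    intro n t ht
    refine mem_dom_of_le ht (by have := ht.1; positivity) ?_
    nlinarith [pow_le_one₀ hc0.le hc1.le (n := n), ht.1]
  have iterk : ∀ n : ℕ, ∀ t ∈ DomIoo R,
      tilde (c^(n+1) * t) ≤ ENNReal.ofReal (1/q) ^ (n+1) * tilde t := by
    intro n
    induction n with
    | zero =>
      intro t ht
      have := mul_step hq0' (key t ht)
      rw [pow_one, pow_one]
      exact this
    | succ n ih =>
      intro t ht
      have hmem : c^(n+1) * t ∈ DomIoo R := mempow (n+1) t ht
      have h1 : tilde (c * (c^(n+1) * t)) ≤ ENNReal.ofReal (1/q) * tilde (c^(n+1)*t) :=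
        mul_step hq0' (key _ hmem)
      have heq : c^(n+2) * t = c * (c^(n+1) * t) := by ring
      rw [heq]
      calc tilde (c * (c^(n+1) * t))
          ≤ ENNReal.ofReal (1/q) * tilde (c^(n+1)*t) := h1
        _ ≤ ENNReal.ofReal (1/q) * (ENNReal.ofReal (1/q) ^ (n+1) * tilde t) :=
            mul_le_mul_right (ih t ht) _
        _ = ENNReal.ofReal (1/q) ^ (n+2) * tilde t := by ring
  -- the constant
  have h1q : (0:ℝ) < 1 - 1/q := by
    have : 1/q < 1 := by rw [div_lt_one hq0']; exact hq1'
    linarith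
  refine ⟨((1-c)/c) * ((1/q) * (1 - 1/q)⁻¹),
    mul_pos (div_pos (by linarith) hc0)
      (mul_pos (by positivity) (inv_pos.mpr h1q)), ?_⟩
  intro t ht
  have ht0 := ht.1
  rw [Ioo_eq_iUnion hc0 hc1 ht0]
  refine le_trans (lintegral_iUnion_le _ _) ?_
  have term : ∀ n : ℕ, (∫⁻ s in Ico (c^(n+1) * t) (c^n * t), 1 / φ s) ≤
      ENNReal.ofReal (1/q) ^ (n+1) * (ENNReal.ofReal t / φ t) * ENNReal.ofReal ((1-c)/c) := by
    intro n
    have hmem : c^(n+1) * t ∈ DomIoo R := mempow (n+1) t ht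
    have ha0 : (0:ℝ) < c^(n+1) * t := by positivity
    have hbound : (∫⁻ s in Ico (c^(n+1) * t) (c^n * t), 1 / φ s) ≤
        (φ (c^(n+1) * t))⁻¹ * ENNReal.ofReal (c^n * t - c^(n+1) * t) := by
      calc (∫⁻ s in Ico (c^(n+1) * t) (c^n * t), 1 / φ s)
          ≤ ∫⁻ _ in Ico (c^(n+1) * t) (c^n * t), (φ (c^(n+1) * t))⁻¹ := by
            refine setLIntegral_mono' measurableSet_Ico fun s hs => ?_
            rw [one_div]
            refine ENNReal.inv_le_inv.mpr (hφ.2.2.1 _ s ha0.le hs.1 ?_)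
            have hsd : s ∈ DomIoo R := by
              refine mem_dom_of_le ht (lt_of_lt_of_le ha0 hs.1) ?_
              have : c^n * t ≤ t := by nlinarith [pow_le_one₀ hc0.le hc1.le (n := n)]
              exact le_trans hs.2.le this
            exact hsd
        _ = (φ (c^(n+1) * t))⁻¹ * ENNReal.ofReal (c^n * t - c^(n+1) * t) := by
            rw [setLIntegral_const, Real.volume_Ico]
    have hinv : (φ (c^(n+1) * t))⁻¹ =
        tilde (c^(n+1) * t) * (ENNReal.ofReal (c^(n+1) * t))⁻¹ := by
      rw [htilde _ hmem, div_eq_mul_inv, mul_right_comm,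
        ENNReal.mul_inv_cancel (ENNReal.ofReal_pos.mpr ha0).ne' ENNReal.ofReal_ne_top,
        one_mul]
    have hratio : (ENNReal.ofReal (c^(n+1) * t))⁻¹ * ENNReal.ofReal (c^n * t - c^(n+1) * t)
        = ENNReal.ofReal ((1-c)/c) := by
      rw [← ENNReal.ofReal_inv_of_pos ha0, ← ENNReal.ofReal_mul (by positivity)]
      congr 1
      field_simp
      ring
    calc (∫⁻ s in Ico (c^(n+1) * t) (c^n * t), 1 / φ s)
        ≤ (φ (c^(n+1) * t))⁻¹ * ENNReal.ofReal (c^n * t - c^(n+1) * t) := hbound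
      _ = tilde (c^(n+1) * t) * ENNReal.ofReal ((1-c)/c) := by
          rw [hinv, mul_assoc, hratio]
      _ ≤ ENNReal.ofReal (1/q) ^ (n+1) * tilde t * ENNReal.ofReal ((1-c)/c) :=
          mul_le_mul_left (iterk n t ht) _
      _ = ENNReal.ofReal (1/q) ^ (n+1) * (ENNReal.ofReal t / φ t) * ENNReal.ofReal ((1-c)/c) := by
          rw [htilde t ht]
  refine le_trans (ENNReal.tsum_le_tsum term) ?_
  have hx1 : ENNReal.ofReal (1/q) < 1 := ENNReal.ofReal_lt_one.mpr (by
    rw [div_lt_one hq0']; exact hq1')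
  have hgeo : ∑' n : ℕ, ENNReal.ofReal (1/q) ^ (n+1) =
      ENNReal.ofReal (1/q) * (1 - ENNReal.ofReal (1/q))⁻¹ := by
    have : ∀ n : ℕ, ENNReal.ofReal (1/q) ^ (n+1) =
        ENNReal.ofReal (1/q) * ENNReal.ofReal (1/q) ^ n := fun n => by
      rw [pow_succ, mul_comm]
    simp_rw [this]
    rw [ENNReal.tsum_mul_left, ENNReal.tsum_geometric]
  have hq2 : (0:ℝ) < 1 - 1/q := h1q
  have hone : (1: ℝ≥0∞) - ENNReal.ofReal (1/q) = ENNReal.ofReal (1 - 1/q) := by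
    rw [ENNReal.ofReal_sub 1 (by positivity), ENNReal.ofReal_one]
  calc ∑' n : ℕ, ENNReal.ofReal (1/q) ^ (n+1) * (ENNReal.ofReal t / φ t) * ENNReal.ofReal ((1-c)/c)
      = (∑' n : ℕ, ENNReal.ofReal (1/q) ^ (n+1)) * ((ENNReal.ofReal t / φ t) * ENNReal.ofReal ((1-c)/c)) := by
        simp_rw [mul_assoc]
        rw [ENNReal.tsum_mul_right]
    _ = ENNReal.ofReal ((1/q) * (1 - 1/q)⁻¹) * ((ENNReal.ofReal t / φ t) * ENNReal.ofReal ((1-c)/c)) := by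
        rw [hgeo, hone, ← ENNReal.ofReal_inv_of_pos hq2, ← ENNReal.ofReal_mul (by positivity)]
    _ = ENNReal.ofReal (((1-c)/c) * ((1/q) * (1 - 1/q)⁻¹)) * (ENNReal.ofReal t / φ t) := by
        rw [ENNReal.ofReal_mul (div_nonneg (by linarith : (0:ℝ) ≤ 1-c) hc0.le)]
        ring
    _ ≤ ENNReal.ofReal (((1-c)/c) * ((1/q) * (1 - 1/q)⁻¹)) * (ENNReal.ofReal t / φ t) := le_rfl
  done

end Part3

/-- Characterization of the `B`-condition: with `φ̃(t) = t/φ(t)` on `(0,R)`, `φ̃(0) = 0`,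
the conditions (i) `∫₀ᵗ ds/φ(s) ≤ C ⋅ t/φ(t)`, (ii) `∫₀ᵗ φ̃(s)/s ds ≤ C ⋅ φ̃(t)` and
(iii) `∃ c ∈ (0,1)` with `inf_{0<t<R} φ̃(t)/φ̃(ct) > 1` are mutually equivalent. -/
theorem statement0 (R : ℝ≥0∞) (hR : 0 < R) (φ : ℝ → ℝ≥0∞)
    (hφ : QuasiConcaveOn R φ)
    (tilde : ℝ → ℝ≥0∞) (htilde0 : tilde 0 = 0)
    (htilde : ∀ t ∈ DomIoo R, tilde t = ENNReal.ofReal t / φ t) :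
    ((∃ C : ℝ, 0 < C ∧ ∀ t ∈ DomIoo R,
        (∫⁻ s in Ioo (0 : ℝ) t, 1 / φ s) ≤
          ENNReal.ofReal C * (ENNReal.ofReal t / φ t)) ↔
      (∃ C : ℝ, 0 < C ∧ ∀ t ∈ DomIoo R,
        (∫⁻ s in Ioo (0 : ℝ) t, tilde s / ENNReal.ofReal s) ≤
          ENNReal.ofReal C * tilde t)) ∧
    ((∃ C : ℝ, 0 < C ∧ ∀ t ∈ DomIoo R,
        (∫⁻ s in Ioo (0 : ℝ) t, 1 / φ s) ≤
          ENNReal.ofReal C * (ENNReal.ofReal t / φ t)) ↔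
      (∃ c : ℝ, 0 < c ∧ c < 1 ∧
        1 < ⨅ t ∈ DomIoo R, tilde t / tilde (c * t))) := by
  have eqInt : ∀ t ∈ DomIoo R, (∫⁻ s in Ioo (0:ℝ) t, tilde s / ENNReal.ofReal s) =
      ∫⁻ s in Ioo (0:ℝ) t, 1 / φ s := by
    intro t ht
    refine setLIntegral_congr_fun measurableSet_Ioo (fun s hs => ?_)
    have hsd : s ∈ DomIoo R := BAux.mem_dom_of_le ht hs.1 hs.2.le
    rw [htilde s hsd, one_div, div_eq_mul_inv, div_eq_mul_inv, mul_right_comm,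
      ENNReal.mul_inv_cancel (ENNReal.ofReal_pos.mpr hs.1).ne' ENNReal.ofReal_ne_top, one_mul]
  constructor
  · constructor
    · rintro ⟨C, hC0, hC⟩
      exact ⟨C, hC0, fun t ht => by
        rw [eqInt t ht, htilde t ht]; exact hC t ht⟩
    · rintro ⟨C, hC0, hC⟩
      refine ⟨C, hC0, fun t ht => ?_⟩
      have h := hC t ht
      rw [eqInt t ht, htilde t ht] at h
      exact h
  · exact ⟨Part2.i_to_iii hφ htilde, Part3.iii_to_i hφ htilde⟩
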